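/- If Δ is a pure shifted simplicial complex on an ordered vertex set E, then Δ satisfies the quasi-circuit axiom: if C₁ and C₂ are distinct circuits (minimal non-faces) and c ∈ C₁ ∩ C₂ satisfies c < max(C₁ △ C₂), then there is a circuit C₃ contained in (C₁ ∪ C₂) \ {c}. -/

import Mathlib

variable {α : Type*} [LinearOrder α] [DecidableEq α] [Fintype α]

/-- A (abstract) simplicial complex: a downward closed family of finite sets. -/
def IsComplex (Δ : Finset α → Prop) : Prop :=
  ∀ ⦃s t : Finset α⦄, Δ t → s ⊆ t → Δ s

/-- A simplicial complex with all faces contained in the ground set `E`. -/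
def IsComplexOn (E : Finset α) (Δ : Finset α → Prop) : Prop :=
  (∀ ⦃s⦄, Δ s → s ⊆ E) ∧ IsComplex Δ

/-- A facet (basis): a maximal face. -/
def IsFacet (Δ : Finset α → Prop) (B : Finset α) : Prop :=
  Δ B ∧ ∀ ⦃C⦄, Δ C → B ⊆ C → B = C

/-- A circuit with respect to the ground set `E`: a minimal non-face contained in `E`. -/
def IsCircuitOn (E : Finset α) (Δ : Finset α → Prop) (C : Finset α) : Prop :=
  C ⊆ E ∧ ¬ Δ C ∧ ∀ ⦃D⦄, D ⊂ C → Δ D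

/-- A circuit: a minimal non-face. -/
def IsCircuit (Δ : Finset α → Prop) (C : Finset α) : Prop :=
  ¬ Δ C ∧ ∀ ⦃D⦄, D ⊂ C → Δ D

/-- Purity: all facets have the same cardinality. -/
def IsPure (Δ : Finset α → Prop) : Prop :=
  ∀ ⦃B B'⦄, IsFacet Δ B → IsFacet Δ B' → B.card = B'.card

/-- Lexicographic order on finite sets, comparing sorted element lists:
`B <lex B'` iff the minimum of the symmetric difference lies in `B`. -/
def lexLt (B B' : Finset α) : Prop :=
  ∃ a ∈ B \ B', ∀ b ∈ symmDiff B B', a ≤ b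

def lexLe (B B' : Finset α) : Prop := B = B' ∨ lexLt B B'

/-- `B₀` is the lexicographically smallest facet of `Δ`. -/
def IsLexMinFacet (Δ : Finset α → Prop) (B₀ : Finset α) : Prop :=
  IsFacet Δ B₀ ∧ ∀ ⦃B⦄, IsFacet Δ B → lexLe B₀ B

/-- Gale (componentwise) order: the `i`-th smallest element of `B` is at most
the `i`-th smallest element of `B'`, for all `i` (in particular equal cardinalities). -/
def galeLe (B B' : Finset α) : Prop :=
  List.Forall₂ (· ≤ ·) (Finset.sort B (· ≤ ·)) (Finset.sort B' (· ≤ ·))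

/-- Quasi-exchange axiom (without the purity requirement). -/
def QE (Δ : Finset α → Prop) : Prop :=
  ∀ ⦃B₁ B₂⦄, IsFacet Δ B₁ → IsFacet Δ B₂ →
    ∀ b₁ ∈ B₁ \ B₂, (∀ b ∈ B₂ \ B₁, b < b₁) →
      ∃ b₂ ∈ B₂ \ B₁, IsFacet Δ (insert b₂ (B₁.erase b₁))

/-- Quasi-circuit axiom (with circuits taken relative to the ground set `E`). -/
def QCon (E : Finset α) (Δ : Finset α → Prop) : Prop :=
  ∀ ⦃C₁ C₂⦄, IsCircuitOn E Δ C₁ → IsCircuitOn E Δ C₂ → C₁ ≠ C₂ →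
    ∀ c ∈ C₁ ∩ C₂, (∃ m ∈ symmDiff C₁ C₂, c < m) →
      ∃ C₃, IsCircuitOn E Δ C₃ ∧ C₃ ⊆ (C₁ ∪ C₂).erase c

/-- Quasi-circuit axiom (circuits are arbitrary minimal non-faces). -/
def QC (Δ : Finset α → Prop) : Prop :=
  ∀ ⦃C₁ C₂⦄, IsCircuit Δ C₁ → IsCircuit Δ C₂ → C₁ ≠ C₂ →
    ∀ c ∈ C₁ ∩ C₂, (∃ m ∈ symmDiff C₁ C₂, c < m) →
      ∃ C₃, IsCircuit Δ C₃ ∧ C₃ ⊆ (C₁ ∪ C₂).erase c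

/-- `b` is an internally passive element of the facet `B`. -/
def InternallyPassive (Δ : Finset α → Prop) (B : Finset α) (b : α) : Prop :=
  b ∈ B ∧ ∃ b', b' < b ∧ b' ∉ B ∧ IsFacet Δ (insert b' (B.erase b))

/-- Contraction of a face `I`. -/
def contract (Δ : Finset α → Prop) (I : Finset α) : Finset α → Prop :=
  fun J => Disjoint J I ∧ Δ (J ∪ I)

/-- Quasi-independence axiom: `Δ` is pure and for faces `I₁, I₂` with `|I₁| > |I₂|`,
if `I₁ \ I ⊆ B_{I,0}` for some `I ⊆ I₁ ∩ I₂`, then some `e ∈ I₁ \ I₂` extends `I₂`. -/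
def QI (Δ : Finset α → Prop) : Prop :=
  IsPure Δ ∧ ∀ ⦃I₁ I₂ : Finset α⦄, Δ I₁ → Δ I₂ → I₂.card < I₁.card →
    (∃ I, I ⊆ I₁ ∩ I₂ ∧ ∃ B, IsLexMinFacet (contract Δ I) B ∧ I₁ \ I ⊆ B) →
    ∃ e ∈ I₁ \ I₂, Δ (insert e I₂)

/-- The First Basis Property. -/
inductive FBP : (Finset α → Prop) → Prop
  | rank1 (Δ : Finset α → Prop) (h : ∀ s, Δ s → s.card ≤ 1) : FBP Δ
  | unique (Δ : Finset α → Prop) (B : Finset α) (hB : IsFacet Δ B)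
      (hu : ∀ B', IsFacet Δ B' → B' = B) : FBP Δ
  | step (Δ : Finset α → Prop) (B₀ : Finset α) (h₀ : IsLexMinFacet Δ B₀)
      (h1 : ∀ v, Δ {v} → v ∉ B₀ → FBP (contract Δ {v}))
      (h2 : ∀ v, Δ {v} → v ∉ B₀ →
        ∃ Bv, IsLexMinFacet (contract Δ {v}) Bv ∧ Bv ⊆ B₀) :
      FBP Δ

lemma exists_circuitOn_of_not_mem (E : Finset α) (Δ : Finset α → Prop) :
    ∀ A : Finset α, A ⊆ E → ¬ Δ A → ∃ C, IsCircuitOn E Δ C ∧ C ⊆ A := by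
  intro A
  induction A using Finset.strongInduction with
  | _ A ih =>
    intro hAE hA
    by_cases h : ∀ D : Finset α, D ⊂ A → Δ D
    · exact ⟨A, ⟨hAE, hA, fun D hD => h D hD⟩, subset_rfl⟩
    · push_neg at h
      obtain ⟨D, hD, hnD⟩ := h
      obtain ⟨C, hC, hCD⟩ := ih D hD (hD.subset.trans hAE) hnD
      exact ⟨C, hC, hCD.trans hD.subset⟩

lemma key_nonface (E : Finset α) (Δ : Finset α → Prop) (hΔ : IsComplexOn E Δ)
    (hshift : ∀ B, Δ B → ∀ i ∈ E, ∀ j ∈ E, i < j → i ∉ B → j ∈ B →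
      Δ (insert i (B.erase j)))
    {C₁ C₂ : Finset α} (h₁E : C₁ ⊆ E) (h₂E : C₂ ⊆ E) (h₂ : ¬ Δ C₂)
    {c m : α} (hm₁ : m ∈ C₁) (hm₂ : m ∉ C₂) (hc₁ : c ∈ C₁) (hc₂ : c ∈ C₂)
    (hcm : c < m) : ¬ Δ ((C₁ ∪ C₂).erase c) := by
  intro hA
  set A := (C₁ ∪ C₂).erase c with hAdef
  have hcA : c ∉ A := Finset.notMem_erase _ _
  have hmA : m ∈ A := Finset.mem_erase.2 ⟨hcm.ne', Finset.mem_union_left _ hm₁⟩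
  have hAE : A ⊆ E := (Finset.erase_subset _ _).trans (Finset.union_subset h₁E h₂E)
  have hface : Δ (insert c (A.erase m)) :=
    hshift A hA c (h₂E hc₂) m (hAE hmA) hcm hcA hmA
  apply h₂
  refine hΔ.2 hface ?_
  intro x hx
  by_cases hxc : x = c
  · simp [hxc]
  · refine Finset.mem_insert_of_mem (Finset.mem_erase.2 ⟨?_, Finset.mem_erase.2 ⟨hxc, Finset.mem_union_right _ hx⟩⟩)
    rintro rfl; exact hm₂ hx

/-- A pure shifted simplicial complex satisfies the quasi-circuit axiom. -/
theorem stmt1 (E : Finset α) (Δ : Finset α → Prop) (hΔ : IsComplexOn E Δ)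
    (hpure : IsPure Δ)
    (hshift : ∀ B, Δ B → ∀ i ∈ E, ∀ j ∈ E, i < j → i ∉ B → j ∈ B →
      Δ (insert i (B.erase j))) :
    QCon E Δ := by
  intro C₁ C₂ h₁ h₂ hne c hc hm
  obtain ⟨m, hm, hcm⟩ := hm
  rw [Finset.mem_inter] at hc
  rw [Finset.mem_symmDiff] at hm
  have : ¬ Δ ((C₁ ∪ C₂).erase c) := by
    rcases hm with ⟨hm₁, hm₂⟩ | ⟨hm₂, hm₁⟩
    · exact key_nonface E Δ hΔ hshift h₁.1 h₂.1 h₂.2.1 hm₁ hm₂ hc.1 hc.2 hcm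
    · rw [Finset.union_comm]
      exact key_nonface E Δ hΔ hshift h₂.1 h₁.1 h₁.2.1 hm₂ hm₁ hc.2 hc.1 hcm
  exact exists_circuitOn_of_not_mem E Δ _
    ((Finset.erase_subset _ _).trans (Finset.union_subset h₁.1 h₂.1)) this
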